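/- Let G be an in-arborescence (each non-root node has one edge directed to its parent) under the independent cascade model. For any set S ⊆ V and live-edge graph L, the boundary ∂R(S,L) = {u ∈ R(S,L) : ∃ (u,v) ∈ E, v ∉ R(S,L)} satisfies |∂R(S,L)| ≤ |S|. -/

import Mathlib

open Finset

/-- Nodes reached from the seed set `S` in the live-edge graph `L`,
viewed as a set of directed edges. -/
noncomputable def reachSet {V : Type*} [Fintype V] [DecidableEq V]
    (L : Finset (V × V)) (S : Finset V) : Finset V := by
  classical
  exact Finset.univ.filter fun v =>
    ∃ u ∈ S, Relation.ReflTransGen (fun a b => (a, b) ∈ L) u v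

/-- From a common source, a functional relation yields comparable endpoints. -/
lemma rtg_comparable {V : Type*} {r : V → V → Prop}
    (hfun : ∀ a b c, r a b → r a c → b = c) :
    ∀ {s u₁ u₂ : V}, Relation.ReflTransGen r s u₁ →
      Relation.ReflTransGen r s u₂ →
      Relation.ReflTransGen r u₁ u₂ ∨ Relation.ReflTransGen r u₂ u₁ := by
  intro s u₁ u₂ h1
  induction h1 using Relation.ReflTransGen.head_induction_on with
  | refl => intro h2; exact Or.inl h2
  | head hsa hau ih =>
    intro h2
    rcases h2.cases_head with rfl | ⟨b, hsb, hbu2⟩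
    · exact Or.inr (Relation.ReflTransGen.head hsa hau)
    · exact ih (by rwa [hfun _ _ _ hsb hsa] at hbu2)

/-- In an in-arborescence (every node has out-degree at most one, the edge to
its parent), the boundary of the reached set of a seed set `S` in any live-edge
subgraph `L` has at most `|S|` vertices. -/
theorem stmt_13 {V : Type*} [Fintype V] [DecidableEq V]
    (E : Finset (V × V))
    (harb : ∀ u : V, (Finset.univ.filter fun v => (u, v) ∈ E).card ≤ 1)
    (L : Finset (V × V)) (hL : L ⊆ E)
    (S : Finset V) :
    ((reachSet L S).filter fun u =>
        ∃ v : V, (u, v) ∈ E ∧ v ∉ reachSet L S).card ≤ S.card := by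
  classical
  set r : V → V → Prop := fun a b => (a, b) ∈ L with hr
  have hfunE : ∀ a b c, (a, b) ∈ E → (a, c) ∈ E → b = c := by
    intro a b c hb hc
    by_contra hne
    have hsub : ({b, c} : Finset V) ⊆ Finset.univ.filter fun v => (a, v) ∈ E := by
      intro x hx
      simp only [Finset.mem_insert, Finset.mem_singleton] at hx
      rcases hx with rfl | rfl <;> simp [hb, hc]
    have h2 : 2 ≤ (Finset.univ.filter fun v => (a, v) ∈ E).card := by
      calc 2 = ({b, c} : Finset V).card := (Finset.card_pair hne).symm
        _ ≤ _ := Finset.card_le_card hsub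
    exact absurd (h2.trans (harb a)) (by norm_num)
  have hfunr : ∀ a b c, r a b → r a c → b = c := fun a b c hb hc =>
    hfunE a b c (hL hb) (hL hc)
  have hmemR : ∀ u, u ∈ reachSet L S ↔ ∃ s ∈ S, Relation.ReflTransGen r s u := by
    intro u; simp [reachSet, hr]
  -- pick a seed for each reached vertex
  set f : V → V := fun u =>
    if h : ∃ s ∈ S, Relation.ReflTransGen r s u then h.choose else u with hf
  apply Finset.card_le_card_of_injOn f
  · intro u hu
    rw [Finset.mem_coe, Finset.mem_filter] at hu
    obtain hh := (hmemR u).mp hu.1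
    simp only [hf, dif_pos hh]
    exact hh.choose_spec.1
  · intro u₁ hu₁ u₂ hu₂ hfe
    rw [Finset.coe_filter, Set.mem_setOf_eq] at hu₁ hu₂
    obtain ⟨hu₁R, v₁, hv₁E, hv₁⟩ := hu₁
    obtain ⟨hu₂R, v₂, hv₂E, hv₂⟩ := hu₂
    obtain h1 := (hmemR u₁).mp hu₁R
    obtain h2 := (hmemR u₂).mp hu₂R
    simp only [hf, dif_pos h1, dif_pos h2] at hfe
    have hs1 : Relation.ReflTransGen r h1.choose u₁ := h1.choose_spec.2
    have hs2 : Relation.ReflTransGen r h1.choose u₂ := by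
      rw [hfe]; exact h2.choose_spec.2
    have hsS : h1.choose ∈ S := h1.choose_spec.1
    have key : ∀ a b : V, a ∈ reachSet L S →
        (∃ v : V, (a, v) ∈ E ∧ v ∉ reachSet L S) →
        Relation.ReflTransGen r a b → a = b := by
      intro a b haR ⟨v, hvE, hvR⟩ hab
      rcases hab.cases_head with rfl | ⟨w, haw, hwb⟩
      · rfl
      · exfalso
        apply hvR
        rw [hmemR]
        obtain ⟨s, hsS, hsa⟩ := (hmemR a).mp haR
        have : v = w := hfunE a v w hvE (hL haw)
        exact ⟨s, hsS, this ▸ (hsa.tail haw)⟩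
    rcases rtg_comparable hfunr hs1 hs2 with h | h
    · exact key u₁ u₂ hu₁R ⟨v₁, hv₁E, hv₁⟩ h
    · exact (key u₂ u₁ hu₂R ⟨v₂, hv₂E, hv₂⟩ h).symm
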